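/- arXiv:1710.01221 — 4 statements merged into one kernel-verified Lean document; each statement's English description precedes it below -/
import Mathlib

section
/- Let μ : [0,∞) → ℝ be locally Lipschitz. Fix L, K > 0 with |μ(y) - μ(0)| ≤ Ky for all y ∈ [0, L], and fix x₁ ∈ (0, L]. Then for all x ∈ [0, x₁], |∫_{x₁}^{x} (μ(y) - μ(0))/y dy| ≤ K(x₁ - x). Consequently, with μ₀ = μ(0) and constants σ, M > 0, the integrating factor ζ(x) = exp((2/σ²)∫_{x₁}^x (μ(y) - M)/y dy) satisfies ζ(x) ~ C·x^{(2/σ²)(μ₀ - M)} as x → 0⁺ for some constant C > 0, in the sense that ζ(x)/x^{(2/σ²)(μ₀ - M)} converges to a finite positive limit. -/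
open MeasureTheory intervalIntegral

/-- Integral bound near 0 from the local Lipschitz property of μ, and the
resulting asymptotics of the integrating factor
ζ(x) = exp((2/σ²)∫_{x₁}^x (μ(y) - M)/y dy) ~ C x^{(2/σ²)(μ₀ - M)} as x → 0⁺. -/
theorem integrating_factor_asymptotics (μ : ℝ → ℝ) (K L x₁ σ M : ℝ)
    (hLoc : LocallyLipschitz μ)
    (hK : 0 < K) (hL : 0 < L)
    (hbound : ∀ y ∈ Set.Icc (0 : ℝ) L, |μ y - μ 0| ≤ K * y)
    (hx₁ : x₁ ∈ Set.Ioc (0 : ℝ) L) (hσ : 0 < σ) (hM : 0 < M) :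
    (∀ x ∈ Set.Icc (0 : ℝ) x₁,
      |∫ y in x₁..x, (μ y - μ 0) / y| ≤ K * (x₁ - x)) ∧
    (∃ C : ℝ, 0 < C ∧
      Filter.Tendsto
        (fun x =>
          Real.exp ((2 / σ ^ 2) * ∫ y in x₁..x, (μ y - M) / y) /
            x ^ ((2 / σ ^ 2) * (μ 0 - M)))
        (nhdsWithin 0 (Set.Ioi 0)) (nhds C)) := by
  obtain ⟨hx₁0, hx₁L⟩ := hx₁
  have hcont : Continuous μ := hLoc.continuous
  set f : ℝ → ℝ := fun y => (μ y - μ 0) / y with hf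
  have hbound' : ∀ y ∈ Set.Icc (0:ℝ) x₁, |f y| ≤ K := by
    intro y hy
    rcases eq_or_lt_of_le hy.1 with h | h
    · simp only [hf, ← h, sub_self, zero_div, abs_zero]
      exact hK.le
    · have hb := hbound y ⟨hy.1, hy.2.trans hx₁L⟩
      simp only [hf]
      rw [abs_div, abs_of_pos h, div_le_iff₀ h]
      linarith [hb]
  have hmeas : Measurable f := (hcont.measurable.sub measurable_const).div measurable_id
  have hint : ∀ a b : ℝ, Set.uIoc a b ⊆ Set.Icc 0 x₁ →
      IntervalIntegrable f MeasureTheory.volume a b := by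
    intro a b hsub
    rw [intervalIntegrable_iff]
    apply Measure.integrableOn_of_bounded (M := K)
    · exact ((measure_mono hsub).trans_lt measure_Icc_lt_top).ne
    · exact hmeas.aestronglyMeasurable
    · filter_upwards [ae_restrict_mem measurableSet_uIoc] with y hy
      rw [Real.norm_eq_abs]
      exact hbound' y (hsub hy)
  have part1 : ∀ x ∈ Set.Icc (0:ℝ) x₁, |∫ y in x₁..x, f y| ≤ K * (x₁ - x) := by
    intro x hx
    have hsub : Set.uIoc x₁ x ⊆ Set.Icc 0 x₁ := by
      rw [Set.uIoc_of_ge hx.2]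
      exact Set.Ioc_subset_Icc_self.trans (Set.Icc_subset_Icc_left hx.1)
    have hb := intervalIntegral.norm_integral_le_of_norm_le_const (C := K) (f := f)
      (a := x₁) (b := x) (fun y hy => by rw [Real.norm_eq_abs]; exact hbound' y (hsub hy))
    rw [Real.norm_eq_abs] at hb
    calc |∫ y in x₁..x, f y| ≤ K * |x - x₁| := hb
      _ = K * (x₁ - x) := by rw [abs_sub_comm, abs_of_nonneg (by linarith [hx.2])]
  refine ⟨part1, ?_⟩
  -- Part 2
  have hg0 : Filter.Tendsto (fun x => ∫ y in x₁..x, f y) (nhdsWithin 0 (Set.Ioi 0))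
      (nhds (∫ y in x₁..(0:ℝ), f y)) := by
    have key : ∀ x ∈ Set.Icc (0:ℝ) x₁,
        ‖(∫ y in x₁..x, f y) - ∫ y in x₁..(0:ℝ), f y‖ ≤ K * x := by
      intro x hx
      have h1 : IntervalIntegrable f MeasureTheory.volume x₁ 0 := by
        apply hint
        rw [Set.uIoc_of_ge hx₁0.le]
        exact Set.Ioc_subset_Icc_self
      have hsub2 : Set.uIoc 0 x ⊆ Set.Icc 0 x₁ := by
        rw [Set.uIoc_of_le hx.1]
        exact Set.Ioc_subset_Icc_self.trans (Set.Icc_subset_Icc_right hx.2)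
      have h2 : IntervalIntegrable f MeasureTheory.volume 0 x := hint _ _ hsub2
      have hadd : (∫ y in x₁..(0:ℝ), f y) + ∫ y in (0:ℝ)..x, f y = ∫ y in x₁..x, f y :=
        integral_add_adjacent_intervals h1 h2
      have heq : (∫ y in x₁..x, f y) - ∫ y in x₁..(0:ℝ), f y = ∫ y in (0:ℝ)..x, f y := by
        linarith
      rw [heq]
      have hb := intervalIntegral.norm_integral_le_of_norm_le_const (C := K) (f := f)
        (a := 0) (b := x) (fun y hy => by rw [Real.norm_eq_abs]; exact hbound' y (hsub2 hy))
      simpa [abs_of_nonneg hx.1] using hb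
    have hsq : Filter.Tendsto
        (fun x => (∫ y in x₁..x, f y) - ∫ y in x₁..(0:ℝ), f y)
        (nhdsWithin 0 (Set.Ioi 0)) (nhds 0) := by
      apply squeeze_zero_norm'
      · filter_upwards [Ioo_mem_nhdsGT_of_mem (Set.left_mem_Ico.mpr hx₁0)] with x hx
        exact key x ⟨hx.1.le, hx.2.le⟩
      · have : Filter.Tendsto (fun x : ℝ => K * x) (nhdsWithin 0 (Set.Ioi 0)) (nhds (K * 0)) :=
          ((continuous_const.mul continuous_id).tendsto 0).mono_left nhdsWithin_le_nhds
        simpa using this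
    have := hsq.add_const (∫ y in x₁..(0:ℝ), f y)
    simpa using this
  set c : ℝ := 2 / σ ^ 2 with hc
  set d : ℝ := μ 0 - M with hd
  refine ⟨Real.exp (c * ∫ y in x₁..(0:ℝ), f y) * Real.exp (-(c * d) * Real.log x₁),
    by positivity, ?_⟩
  have hlim : Filter.Tendsto
      (fun x => Real.exp (c * ∫ y in x₁..x, f y) * Real.exp (-(c * d) * Real.log x₁))
      (nhdsWithin 0 (Set.Ioi 0))
      (nhds (Real.exp (c * ∫ y in x₁..(0:ℝ), f y) * Real.exp (-(c * d) * Real.log x₁))) :=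
    ((Real.continuous_exp.tendsto _).comp (hg0.const_mul c)).mul_const _
  apply hlim.congr'
  filter_upwards [Ioo_mem_nhdsGT_of_mem (Set.left_mem_Ico.mpr hx₁0)] with x hx
  have hx0 : (0:ℝ) < x := hx.1
  have huIcc : Set.uIcc x₁ x = Set.Icc x x₁ := Set.uIcc_of_ge hx.2.le
  have hmem0 : (0:ℝ) ∉ Set.uIcc x₁ x := by
    rw [huIcc]
    intro h
    exact absurd h.1 (not_le.mpr hx0)
  have h1 : IntervalIntegrable f MeasureTheory.volume x₁ x := by
    apply hint
    rw [Set.uIoc_of_ge hx.2.le]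
    exact Set.Ioc_subset_Icc_self.trans (Set.Icc_subset_Icc_left hx0.le)
  have h2 : IntervalIntegrable (fun y => d / y) MeasureTheory.volume x₁ x := by
    apply ContinuousOn.intervalIntegrable
    apply ContinuousOn.div continuousOn_const continuousOn_id
    intro y hy
    rw [huIcc] at hy
    exact ne_of_gt (lt_of_lt_of_le hx0 hy.1)
  have hsplit : (∫ y in x₁..x, (μ y - M) / y)
      = (∫ y in x₁..x, f y) + d * (Real.log x - Real.log x₁) := by
    have hcg : (∫ y in x₁..x, (μ y - M) / y) = ∫ y in x₁..x, (f y + d / y) := by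
      apply intervalIntegral.integral_congr
      intro y hy
      have hy0 : y ≠ 0 := by
        rw [huIcc] at hy
        exact ne_of_gt (lt_of_lt_of_le hx0 hy.1)
      simp only [hf, hd]
      field_simp
      ring
    rw [hcg, intervalIntegral.integral_add h1 h2]
    congr 1
    have hdiv : (∫ y in x₁..x, d / y) = d * ∫ y in x₁..x, 1 / y := by
      rw [← intervalIntegral.integral_const_mul]
      congr 1
      ext y
      ring
    rw [hdiv, integral_one_div hmem0, Real.log_div hx0.ne' hx₁0.ne']
  show Real.exp (c * ∫ y in x₁..x, f y) * Real.exp (-(c * d) * Real.log x₁)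
      = Real.exp (c * ∫ y in x₁..x, (μ y - M) / y) / x ^ (c * d)
  rw [hsplit, Real.rpow_def_of_pos hx0, ← Real.exp_add, ← Real.exp_sub]
  congr 1
  ring
end

section
/- Let σ, M, ρ > 0, μ₀ ∈ ℝ with μ₀ < M. Consider a solution φ on (0, x₀) of the linear ODE φ'(x) + γ(x)φ(x) = β(x), where γ(x) = 2(μ(x) - M)/(σ²x), β(x) = 2(ρ - Mx)/(σ²x²), and μ is locally Lipschitz with μ(0) = μ₀. Then lim_{x→0⁺} φ(x) = +∞ or lim_{x→0⁺} φ(x) = -∞; in particular φ is unbounded near 0. -/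
open Set Filter MeasureTheory intervalIntegral

/-- Integrating-factor exponent: `G(x) = ∫_a^x 2(μ(t)-M)/(σ²t) dt`. -/
noncomputable def blowG (μ : ℝ → ℝ) (σ M a x : ℝ) : ℝ :=
  ∫ t in a..x, 2 * (μ t - M) / (σ ^ 2 * t)

/-- Case μ₀ < M: any solution on (0, x₀) of
φ'(x) + (2(μ(x) - M)/(σ²x))φ(x) = 2(ρ - Mx)/(σ²x²)
blows up to +∞ or -∞ as x → 0⁺. -/
theorem ode_blowup_at_zero (μ φ : ℝ → ℝ) (σ M ρ μ₀ x₀ : ℝ)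
    (hσ : 0 < σ) (hM : 0 < M) (hρ : 0 < ρ) (hx₀ : 0 < x₀)
    (hμ₀ : μ 0 = μ₀) (hμ₀M : μ₀ < M)
    (hLoc : LocallyLipschitz μ)
    (hode : ∀ x ∈ Set.Ioo (0 : ℝ) x₀,
      HasDerivAt φ (2 * (ρ - M * x) / (σ ^ 2 * x ^ 2)
        - 2 * (μ x - M) / (σ ^ 2 * x) * φ x) x) :
    Filter.Tendsto φ (nhdsWithin 0 (Set.Ioi 0)) Filter.atTop ∨
    Filter.Tendsto φ (nhdsWithin 0 (Set.Ioi 0)) Filter.atBot := by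
  right
  set d := M - μ₀ with hd_def
  have hd : 0 < d := by simp only [hd_def]; linarith
  have hμc : Continuous μ := hLoc.continuous
  obtain ⟨δ, hδ0, hδ⟩ := Metric.continuousAt_iff.mp hμc.continuousAt (d / 2) (by positivity)
  set a := min (min (δ / 2) (ρ / (2 * M))) (x₀ / 2) with ha_def
  have ha0 : 0 < a :=
    lt_min (lt_min (by positivity) (by positivity)) (by positivity)
  have haδ : a < δ := lt_of_le_of_lt (le_trans (min_le_left _ _) (min_le_left _ _)) (by linarith)
  have haρ : a ≤ ρ / (2 * M) := le_trans (min_le_left _ _) (min_le_right _ _)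
  have hax₀ : a < x₀ := lt_of_le_of_lt (min_le_right _ _) (by linarith)
  -- bounds on μ near 0
  have hμb : ∀ t ∈ Set.Ioc (0 : ℝ) a, μ t - M ≤ -(d / 2) ∧ -(3 / 2 * d) ≤ μ t - M := by
    intro t ht
    have hdist : dist t 0 < δ := by
      rw [Real.dist_eq, sub_zero, abs_of_pos ht.1]
      linarith [ht.2]
    have h1 := hδ hdist
    rw [hμ₀, Real.dist_eq] at h1
    have h2 := abs_lt.mp h1
    exact ⟨by linarith [h2.2], by linarith [h2.1]⟩
  -- continuity of the coefficient γ on (0, ∞)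
  have hgc : ContinuousOn (fun t => 2 * (μ t - M) / (σ ^ 2 * t)) (Set.Ioi (0 : ℝ)) := by
    apply ContinuousOn.div
    · exact (continuous_const.mul (hμc.sub continuous_const)).continuousOn
    · exact (continuous_const.mul continuous_id).continuousOn
    · intro x hx
      exact ne_of_gt (mul_pos (pow_pos hσ 2) hx)
  have hsub : ∀ x : ℝ, 0 < x → Set.uIcc a x ⊆ Set.Ioi (0 : ℝ) := by
    intro x hx t ht
    rcases Set.mem_uIcc.mp ht with h | h
    · exact lt_of_lt_of_le ha0 h.1
    · exact lt_of_lt_of_le hx h.1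
  have hInt : ∀ x : ℝ, 0 < x →
      IntervalIntegrable (fun t => 2 * (μ t - M) / (σ ^ 2 * t)) volume a x :=
    fun x hx => (hgc.mono (hsub x hx)).intervalIntegrable
  -- derivative of G
  have hGd : ∀ x : ℝ, 0 < x →
      HasDerivAt (blowG μ σ M a) (2 * (μ x - M) / (σ ^ 2 * x)) x := by
    intro x hx
    exact intervalIntegral.integral_hasDerivAt_right (hInt x hx)
      (hgc.stronglyMeasurableAtFilter isOpen_Ioi x hx)
      (hgc.continuousAt (Ioi_mem_nhds hx))
  -- G is nonnegative on (0, a]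
  have hGnn : ∀ x ∈ Set.Ioc (0 : ℝ) a, 0 ≤ blowG μ σ M a x := by
    intro x hx
    have key : 0 ≤ ∫ t in x..a, -(2 * (μ t - M) / (σ ^ 2 * t)) := by
      apply intervalIntegral.integral_nonneg hx.2
      intro u hu
      have hu0 : 0 < u := lt_of_lt_of_le hx.1 hu.1
      have hua : u ≤ a := hu.2
      have hb := (hμb u ⟨hu0, hua⟩).1
      have hnum : 2 * (μ u - M) ≤ 0 := by linarith
      have hden : 0 < σ ^ 2 * u := mul_pos (pow_pos hσ 2) hu0
      have := div_nonpos_of_nonpos_of_nonneg hnum hden.le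
      linarith
    rw [intervalIntegral.integral_neg] at key
    have hsymm : blowG μ σ M a x = -∫ t in x..a, 2 * (μ t - M) / (σ ^ 2 * t) := by
      rw [blowG, intervalIntegral.integral_symm]
    rw [hsymm]
    linarith
  -- the constant k
  set k := ρ / (3 * d + σ ^ 2) with hk_def
  have hk : 0 < k := div_pos hρ (by nlinarith)
  set ζ : ℝ → ℝ := fun x => Real.exp (blowG μ σ M a x) with hζ_def
  set W : ℝ → ℝ := fun x => ζ x * φ x + k * (ζ x / x) with hW_def
  -- derivative of W
  have hWd : ∀ x ∈ Set.Ioo (0 : ℝ) a, HasDerivAt W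
      (ζ x * (2 * (ρ - M * x) / (σ ^ 2 * x ^ 2))
        + k * ((ζ x * (2 * (μ x - M) / (σ ^ 2 * x)) * x - ζ x * 1) / x ^ 2)) x := by
    intro x hx
    have hx0 := hx.1
    have hζ' : HasDerivAt ζ (Real.exp (blowG μ σ M a x) * (2 * (μ x - M) / (σ ^ 2 * x))) x :=
      (hGd x hx0).exp
    have hφ' := hode x ⟨hx0, lt_trans hx.2 hax₀⟩
    have h1 := hζ'.mul hφ'
    have h2 := hζ'.div (hasDerivAt_id x) (ne_of_gt hx0)
    have h3 := h1.add (h2.const_mul k)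
    refine h3.congr_deriv ?_
    simp only [hζ_def, id_eq]
    ring
  -- nonnegativity of the derivative of W
  have hWpos : ∀ x ∈ Set.Ioo (0 : ℝ) a,
      0 ≤ ζ x * (2 * (ρ - M * x) / (σ ^ 2 * x ^ 2))
        + k * ((ζ x * (2 * (μ x - M) / (σ ^ 2 * x)) * x - ζ x * 1) / x ^ 2) := by
    intro x hx
    have hx0 := hx.1
    have hζpos : 0 < ζ x := Real.exp_pos _
    obtain ⟨hub, hlb⟩ := hμb x ⟨hx0, hx.2.le⟩
    have h2Mx : 2 * M * x ≤ ρ := by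
      have : x ≤ ρ / (2 * M) := le_trans hx.2.le haρ
      have h2M : (0:ℝ) < 2 * M := by linarith
      calc 2 * M * x ≤ 2 * M * (ρ / (2 * M)) := by
            exact mul_le_mul_of_nonneg_left this h2M.le
        _ = ρ := by field_simp
    have hkk : k * (3 * d + σ ^ 2) = ρ := by
      rw [hk_def]
      field_simp
    have hkey : 0 ≤ 2 * (ρ - M * x) + k * (2 * (μ x - M) - σ ^ 2) := by
      nlinarith [mul_le_mul_of_nonneg_left
        (show -(3 * d) - σ ^ 2 ≤ 2 * (μ x - M) - σ ^ 2 by linarith) hk.le]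
    have hE : ζ x * (2 * (ρ - M * x) / (σ ^ 2 * x ^ 2))
        + k * ((ζ x * (2 * (μ x - M) / (σ ^ 2 * x)) * x - ζ x * 1) / x ^ 2)
        = ζ x * (2 * (ρ - M * x) + k * (2 * (μ x - M) - σ ^ 2)) / (σ ^ 2 * x ^ 2) := by
      field_simp
    rw [hE]
    exact div_nonneg (mul_nonneg hζpos.le hkey) (by positivity)
  -- W is monotone on (0, a)
  have hWmono : MonotoneOn W (Set.Ioo (0 : ℝ) a) := by
    apply monotoneOn_of_deriv_nonneg (convex_Ioo 0 a)
    · intro x hx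
      exact (hWd x hx).differentiableAt.continuousAt.continuousWithinAt
    · rw [isOpen_Ioo.interior_eq]
      intro x hx
      exact (hWd x hx).differentiableAt.differentiableWithinAt
    · rw [isOpen_Ioo.interior_eq]
      intro x hx
      rw [(hWd x hx).deriv]
      exact hWpos x hx
  -- the pointwise bound
  have hbd : ∀ x ∈ Set.Ioo (0 : ℝ) (a / 2), φ x ≤ |W (a / 2)| - k * x⁻¹ := by
    intro x hx
    have hx0 := hx.1
    have hxa : x ∈ Set.Ioo (0 : ℝ) a := ⟨hx0, by linarith [hx.2]⟩
    have hb2 : a / 2 ∈ Set.Ioo (0 : ℝ) a := ⟨by linarith, by linarith⟩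
    have hmono := hWmono hxa hb2 hx.2.le
    have hζ1 : 1 ≤ ζ x := Real.one_le_exp (hGnn x ⟨hx0, hxa.2.le⟩)
    simp only [hW_def] at hmono
    have habs : ζ x * φ x + k * (ζ x / x) ≤ |W (a / 2)| :=
      le_trans hmono (le_abs_self _)
    have hxinv : 0 < x⁻¹ := inv_pos.mpr hx0
    have hdiv : ζ x / x = ζ x * x⁻¹ := div_eq_mul_inv _ _
    rw [hdiv] at habs
    nlinarith [abs_nonneg (W (a / 2)), mul_pos hk hxinv,
      mul_nonneg (mul_nonneg hk.le (sub_nonneg.mpr hζ1)) hxinv.le]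
  -- conclude
  have h1 : Tendsto (fun x : ℝ => x⁻¹) (nhdsWithin 0 (Set.Ioi 0)) atTop :=
    tendsto_inv_nhdsGT_zero
  have h2 : Tendsto (fun x : ℝ => k * x⁻¹) (nhdsWithin 0 (Set.Ioi 0)) atTop :=
    h1.const_mul_atTop hk
  have h3 : Tendsto (fun x : ℝ => |W (a / 2)| - k * x⁻¹) (nhdsWithin 0 (Set.Ioi 0)) atBot := by
    have h2n : Tendsto (fun x : ℝ => -(k * x⁻¹)) (nhdsWithin 0 (Set.Ioi 0)) atBot :=
      Filter.tendsto_neg_atTop_atBot.comp h2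
    simpa [sub_eq_add_neg] using
      Filter.tendsto_atBot_add_const_left _ (|W (a / 2)|) h2n
  apply tendsto_atBot_mono' _ _ h3
  filter_upwards [Ioo_mem_nhdsGT_of_mem
    (Set.mem_Ico.mpr ⟨le_refl (0:ℝ), show (0:ℝ) < a / 2 by linarith⟩)] with x hx
  exact hbd x hx
end

section
/- Let σ, M, ρ > 0 and μ locally Lipschitz, decreasing, with μ(x) → -∞ as x → ∞. Suppose φ solves φ'(x) + (2μ(x)/(σ²x))φ(x) = 2ρ/(σ²x²) on (χ, ∞) for some χ > 0. Let ζ(x) = exp((2/σ²)∫_{x₁}^x μ(y)/y dy) with x₁ > χ chosen so that μ(y) < -c < -σ²/2 for y ≥ x₁. If the constant J := ζ(x₀)φ(x₀) + ∫_{x₀}^∞ ζ(y)·(2ρ/(σ²y²)) dy is > 0 then φ(x)/x → +∞ as x → ∞; if J ≤ 0 then φ(x) < 0 for all x > x₀. -/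
open MeasureTheory intervalIntegral

/-- Dichotomy at infinity: for φ solving φ' + (2μ/(σ²x))φ = 2ρ/(σ²x²) on (χ,∞),
with integrating factor ζ, if J := ζ(x₀)φ(x₀) + ∫_{x₀}^∞ ζ(y)·2ρ/(σ²y²) dy > 0
then φ(x)/x → +∞; if J ≤ 0 then φ < 0 on (x₀,∞). -/
theorem dichotomy_at_infinity (μ φ : ℝ → ℝ) (σ M ρ χ c x₁ x₀ : ℝ)
    (hσ : 0 < σ) (hM : 0 < M) (hρ : 0 < ρ) (hχ : 0 < χ)
    (hLoc : LocallyLipschitz μ) (hanti : StrictAntiOn μ (Set.Ici 0))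
    (htend : Filter.Tendsto μ Filter.atTop Filter.atBot)
    (hode : ∀ x ∈ Set.Ioi χ,
      HasDerivAt φ (2 * ρ / (σ ^ 2 * x ^ 2) - 2 * μ x / (σ ^ 2 * x) * φ x) x)
    (hc : σ ^ 2 / 2 < c) (hx₁ : χ < x₁) (hμc : ∀ y : ℝ, x₁ ≤ y → μ y < -c)
    (hx₀ : x₁ ≤ x₀) :
    let ζ : ℝ → ℝ := fun x => Real.exp ((2 / σ ^ 2) * ∫ y in x₁..x, μ y / y)
    let J : ℝ := ζ x₀ * φ x₀ + ∫ y in Set.Ioi x₀, ζ y * (2 * ρ / (σ ^ 2 * y ^ 2))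
    (0 < J → Filter.Tendsto (fun x => φ x / x) Filter.atTop Filter.atTop) ∧
    (J ≤ 0 → ∀ x : ℝ, x₀ < x → φ x < 0) := by
  intro ζ J
  have hσ2 : (0:ℝ) < σ ^ 2 := by positivity
  have hχx₁ : (0:ℝ) < x₁ := hχ.trans hx₁
  have hx₀pos : (0:ℝ) < x₀ := hχx₁.trans_le hx₀
  have hcpos : (0:ℝ) < c := lt_trans (by positivity) hc
  have hμcont : Continuous μ := hLoc.continuous
  have hζpos : ∀ x, 0 < ζ x := fun x => Real.exp_pos _
  have hfc : ContinuousOn (fun y => μ y / y) (Set.Ioi (0:ℝ)) :=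
    ContinuousOn.div hμcont.continuousOn continuousOn_id fun y hy => ne_of_gt hy
  -- derivative of ζ
  have hζd : ∀ x ∈ Set.Ioi χ, HasDerivAt ζ (2 * μ x / (σ ^ 2 * x) * ζ x) x := by
    intro x hx
    have hx0 : (0:ℝ) < x := hχ.trans hx
    have hsub : Set.uIcc x₁ x ⊆ Set.Ioi (0:ℝ) := by
      intro y hy
      rcases Set.mem_uIcc.mp hy with h | h
      · exact lt_of_lt_of_le hχx₁ h.1
      · exact lt_of_lt_of_le hx0 h.1
    have hint : IntervalIntegrable (fun y => μ y / y) volume x₁ x :=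
      (hfc.mono hsub).intervalIntegrable
    have hF : HasDerivAt (fun u => ∫ y in x₁..u, μ y / y) (μ x / x) x :=
      intervalIntegral.integral_hasDerivAt_right hint
        ⟨Set.Ioi 0, Ioi_mem_nhds hx0, hfc.aestronglyMeasurable measurableSet_Ioi⟩
        (hfc.continuousAt (Ioi_mem_nhds hx0))
    have h2 := (hF.const_mul (2 / σ ^ 2)).exp
    convert h2 using 1
    show 2 * μ x / (σ ^ 2 * x) * ζ x = _
    show 2 * μ x / (σ ^ 2 * x) * Real.exp (2 / σ ^ 2 * ∫ y in x₁..x, μ y / y) = _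
    field_simp
  -- continuity of ζ and of the integrand
  have hcontζ : ContinuousOn ζ (Set.Ioi χ) := fun x hx =>
    (hζd x hx).continuousAt.continuousWithinAt
  have hconth : ContinuousOn (fun y => ζ y * (2 * ρ / (σ ^ 2 * y ^ 2))) (Set.Ioi χ) := by
    apply hcontζ.mul
    apply ContinuousOn.div continuousOn_const
    · exact continuousOn_const.mul (continuousOn_id.pow 2)
    · intro y hy
      have hy0 : (0:ℝ) < y := hχ.trans hy
      positivity
  -- bound on the integral of μ/y
  have hbound : ∀ x, x₁ ≤ x →
      (∫ y in x₁..x, μ y / y) ≤ -c * (Real.log x - Real.log x₁) := by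
    intro x hx
    have hx0 : (0:ℝ) < x := hχx₁.trans_le hx
    have hsub : Set.uIcc x₁ x ⊆ Set.Ioi (0:ℝ) := by
      rw [Set.uIcc_of_le hx]
      intro y hy; exact lt_of_lt_of_le hχx₁ hy.1
    have hint1 : IntervalIntegrable (fun y => μ y / y) volume x₁ x :=
      (hfc.mono hsub).intervalIntegrable
    have hint2 : IntervalIntegrable (fun y => -c / y) volume x₁ x := by
      apply ContinuousOn.intervalIntegrable
      exact ContinuousOn.div continuousOn_const continuousOn_id
        fun y hy => ne_of_gt (hsub hy)
    have hle : ∀ y ∈ Set.Icc x₁ x, μ y / y ≤ -c / y := by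
      intro y hy
      have hy0 : (0:ℝ) < y := lt_of_lt_of_le hχx₁ hy.1
      exact (div_le_div_iff_of_pos_right hy0).mpr (hμc y hy.1).le
    have h0 : (0:ℝ) ∉ Set.uIcc x₁ x := fun h => lt_irrefl 0 (Set.mem_Ioi.mp (hsub h))
    calc (∫ y in x₁..x, μ y / y) ≤ ∫ y in x₁..x, -c / y :=
          intervalIntegral.integral_mono_on hx hint1 hint2 hle
      _ = -c * (Real.log x - Real.log x₁) := by
          simp only [div_eq_mul_inv]
          rw [intervalIntegral.integral_const_mul, integral_inv h0,
            Real.log_div (ne_of_gt hx0) (ne_of_gt hχx₁)]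
  -- the exponent
  set p : ℝ := 2 * c / σ ^ 2 with hpdef
  have hp1 : 1 < p := by
    rw [hpdef, lt_div_iff₀ hσ2]; linarith
  -- pointwise bound on ζ
  have hζle : ∀ x, x₁ ≤ x → ζ x ≤ (x / x₁) ^ (-p) := by
    intro x hx
    have hx0 : (0:ℝ) < x := hχx₁.trans_le hx
    have h1 : (2 / σ ^ 2) * ∫ y in x₁..x, μ y / y ≤
        (2 / σ ^ 2) * (-c * (Real.log x - Real.log x₁)) :=
      mul_le_mul_of_nonneg_left (hbound x hx) (by positivity)
    calc ζ x ≤ Real.exp ((2 / σ ^ 2) * (-c * (Real.log x - Real.log x₁))) :=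
          Real.exp_le_exp.mpr h1
      _ = (x / x₁) ^ (-p) := by
          rw [Real.rpow_def_of_pos (div_pos hx0 hχx₁),
            Real.log_div (ne_of_gt hx0) (ne_of_gt hχx₁), hpdef]
          congr 1
          field_simp
  -- ζ ≤ 1 on [x₁, ∞)
  have hζle1 : ∀ x, x₁ ≤ x → ζ x ≤ 1 := by
    intro x hx
    have hx0 : (0:ℝ) < x := hχx₁.trans_le hx
    refine le_trans (hζle x hx) ?_
    rw [show (1:ℝ) = (1:ℝ) ^ (-p) from (Real.one_rpow _).symm]
    apply Real.rpow_le_rpow_of_nonpos (by norm_num) _ (by linarith)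
    rw [le_div_iff₀ hχx₁]; linarith
  -- integrability of the integrand on Ioi x₀
  have hInt : IntegrableOn (fun y => ζ y * (2 * ρ / (σ ^ 2 * y ^ 2))) (Set.Ioi x₀) := by
    have hmeas : AEStronglyMeasurable (fun y => ζ y * (2 * ρ / (σ ^ 2 * y ^ 2)))
        (volume.restrict (Set.Ioi x₀)) := by
      apply (hconth.mono (Set.Ioi_subset_Ioi (le_of_lt (hx₁.trans_le hx₀)))).aestronglyMeasurable
      exact measurableSet_Ioi
    have hg : IntegrableOn (fun y : ℝ => 2 * ρ / σ ^ 2 * y ^ (-2:ℝ)) (Set.Ioi x₀) :=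
      (integrableOn_Ioi_rpow_of_lt (by norm_num) hx₀pos).const_mul _
    apply hg.mono' hmeas
    rw [ae_restrict_iff' measurableSet_Ioi]
    apply ae_of_all
    intro y hy
    have hy1 : x₁ ≤ y := hx₀.trans (le_of_lt hy)
    have hy0 : (0:ℝ) < y := hχx₁.trans_le hy1
    have hnn : 0 ≤ ζ y * (2 * ρ / (σ ^ 2 * y ^ 2)) := by positivity
    rw [Real.norm_eq_abs, abs_of_nonneg hnn]
    have hrw : y ^ (-2:ℝ) = (y ^ 2)⁻¹ := by
      rw [Real.rpow_neg hy0.le, show ((2:ℝ)) = ((2:ℕ):ℝ) by norm_num, Real.rpow_natCast]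
    rw [hrw]
    calc ζ y * (2 * ρ / (σ ^ 2 * y ^ 2)) ≤ 1 * (2 * ρ / (σ ^ 2 * y ^ 2)) := by
          apply mul_le_mul_of_nonneg_right (hζle1 y hy1)
          positivity
      _ = 2 * ρ / σ ^ 2 * (y ^ 2)⁻¹ := by field_simp
  -- derivative of ζ * φ
  have hgd : ∀ x ∈ Set.Ioi χ,
      HasDerivAt (fun x => ζ x * φ x) (ζ x * (2 * ρ / (σ ^ 2 * x ^ 2))) x := by
    intro x hx
    have hx0 : (0:ℝ) < x := hχ.trans hx
    have h2 : HasDerivAt (fun x => ζ x * φ x) _ x := (hζd x hx).mul (hode x hx)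
    convert h2 using 1
    ring
  -- fundamental identity
  have key : ∀ x, x₀ ≤ x → ζ x * φ x =
      ζ x₀ * φ x₀ + ∫ y in x₀..x, ζ y * (2 * ρ / (σ ^ 2 * y ^ 2)) := by
    intro x hx
    have heq : (∫ y in x₀..x, ζ y * (2 * ρ / (σ ^ 2 * y ^ 2))) =
        ζ x * φ x - ζ x₀ * φ x₀ := by
      apply intervalIntegral.integral_eq_sub_of_hasDerivAt
      · intro t ht
        rw [Set.uIcc_of_le hx] at ht
        exact hgd t (lt_of_lt_of_le hx₁ (hx₀.trans ht.1))
      · apply ContinuousOn.intervalIntegrable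
        apply hconth.mono
        rw [Set.uIcc_of_le hx]
        intro y hy
        exact lt_of_lt_of_le hx₁ (hx₀.trans hy.1)
    linarith
  -- splitting of the improper integral
  have hsplit : ∀ x, x₀ ≤ x →
      (∫ y in Set.Ioi x₀, ζ y * (2 * ρ / (σ ^ 2 * y ^ 2))) =
        (∫ y in x₀..x, ζ y * (2 * ρ / (σ ^ 2 * y ^ 2))) +
          ∫ y in Set.Ioi x, ζ y * (2 * ρ / (σ ^ 2 * y ^ 2)) := by
    intro x hx
    rw [intervalIntegral.integral_of_le hx,
      ← MeasureTheory.setIntegral_union (Set.Ioc_disjoint_Ioi le_rfl) measurableSet_Ioi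
        (hInt.mono_set Set.Ioc_subset_Ioi_self) (hInt.mono_set (Set.Ioi_subset_Ioi hx)),
      Set.Ioc_union_Ioi_eq_Ioi hx]
  -- positivity of the tail
  have hTpos : ∀ x, x₀ ≤ x → 0 < ∫ y in Set.Ioi x, ζ y * (2 * ρ / (σ ^ 2 * y ^ 2)) := by
    intro x hx
    have hx0 : (0:ℝ) < x := hx₀pos.trans_le hx
    rw [setIntegral_pos_iff_support_of_nonneg_ae]
    · refine lt_of_lt_of_le ?_ (measure_mono (s := Set.Ioi x) ?_)
      · rw [Real.volume_Ioi]; exact ENNReal.zero_lt_top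
      · intro y hy
        have hy0 : (0:ℝ) < y := hx0.trans hy
        refine ⟨?_, hy⟩
        have : 0 < ζ y * (2 * ρ / (σ ^ 2 * y ^ 2)) := by
          apply mul_pos (hζpos y); positivity
        exact ne_of_gt this
    · rw [Filter.EventuallyLE, ae_restrict_iff' measurableSet_Ioi]
      apply ae_of_all
      intro y hy
      have hy0 : (0:ℝ) < y := hx0.trans hy
      have := hζpos y
      simp only [Pi.zero_apply]
      positivity
    · exact hInt.mono_set (Set.Ioi_subset_Ioi hx)
  -- x * ζ x → 0 from the right
  have hxz0 : Filter.Tendsto (fun x => x * ζ x) Filter.atTop (nhdsWithin 0 (Set.Ioi 0)) := by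
    rw [tendsto_nhdsWithin_iff]
    constructor
    · apply squeeze_zero' (g := fun x => x₁ ^ p * x ^ (1 - p))
      · filter_upwards [Filter.eventually_gt_atTop 0] with x hx
        exact le_of_lt (mul_pos hx (hζpos x))
      · filter_upwards [Filter.eventually_ge_atTop x₁] with x hx
        have hx0 : (0:ℝ) < x := hχx₁.trans_le hx
        calc x * ζ x ≤ x * (x / x₁) ^ (-p) :=
              mul_le_mul_of_nonneg_left (hζle x hx) hx0.le
          _ = x₁ ^ p * x ^ (1 - p) := by
              rw [Real.div_rpow hx0.le hχx₁.le, Real.rpow_neg hχx₁.le,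
                show (1:ℝ) - p = 1 + (-p) by ring, Real.rpow_add hx0, Real.rpow_one,
                div_eq_mul_inv, inv_inv]
              ring
      · have h1 : Filter.Tendsto (fun x : ℝ => x ^ (-(p - 1))) Filter.atTop (nhds 0) :=
          tendsto_rpow_neg_atTop (by linarith)
        have h2 := h1.const_mul (x₁ ^ p)
        rw [mul_zero] at h2
        refine h2.congr fun x => ?_
        rw [show -(p - 1) = 1 - p by ring]
    · filter_upwards [Filter.eventually_gt_atTop 0] with x hx
      exact mul_pos hx (hζpos x)
  -- ζ x * φ x → J
  have hItend := MeasureTheory.intervalIntegral_tendsto_integral_Ioi x₀ hInt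
    (Filter.tendsto_id (α := ℝ))
  have hgJ : Filter.Tendsto (fun x => ζ x * φ x) Filter.atTop (nhds J) := by
    have h1 : Filter.Tendsto
        (fun x => ζ x₀ * φ x₀ + ∫ y in x₀..x, ζ y * (2 * ρ / (σ ^ 2 * y ^ 2)))
        Filter.atTop (nhds J) := tendsto_const_nhds.add hItend
    apply h1.congr'
    filter_upwards [Filter.eventually_ge_atTop x₀] with x hx
    exact (key x hx).symm
  constructor
  · -- case J > 0
    intro hJ
    have hinv : Filter.Tendsto (fun x => (x * ζ x)⁻¹) Filter.atTop Filter.atTop :=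
      tendsto_inv_nhdsGT_zero.comp hxz0
    have h1 : Filter.Tendsto (fun x => ζ x * φ x * (x * ζ x)⁻¹) Filter.atTop Filter.atTop :=
      hgJ.pos_mul_atTop hJ hinv
    apply h1.congr'
    filter_upwards [Filter.eventually_gt_atTop 0] with x hx
    have hζne : ζ x ≠ 0 := ne_of_gt (hζpos x)
    field_simp
  · -- case J ≤ 0
    intro hJ x hx
    have hx' : x₀ ≤ x := hx.le
    have hT := hTpos x hx'
    have hS := hsplit x hx'
    have hK := key x hx'
    have hgneg : ζ x * φ x < 0 := by
      have hJdef : J = ζ x₀ * φ x₀ + ∫ y in Set.Ioi x₀, ζ y * (2 * ρ / (σ ^ 2 * y ^ 2)) := rfl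
      rw [hJdef] at hJ
      linarith
    by_contra hcon
    push_neg at hcon
    exact absurd (mul_nonneg (hζpos x).le hcon) (not_le.mpr hgneg)
end

section
/- Let ρ, σ > 0 and μ : [0,∞) → ℝ continuous with g(x) := ρ - xμ(x) having the sign structure: g > 0 on [0,α₁), g < 0 on (α₁,α₂), g > 0 on (α₂,∞) for some 0 < α₁ < α₂. Suppose φ : (0,∞) → ℝ is C¹ and satisfies: whenever φ(x₀) = 1, φ'(x₀) = 2g(x₀)/(σ²x₀²). Then φ can cross the level 1 from below (i.e., φ(x₀) = 1 and φ'(x₀) > 0) only at points x₀ ∈ (0,α₁) ∪ (α₂,∞), and from above (φ'(x₀) < 0) only at points x₀ ∈ (α₁,α₂). Moreover, between two consecutive crossings on any interval where g has constant sign, the crossing directions must alternate, so φ crosses the level 1 at most three times on (0,∞). -/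
open Set Filter Topology

lemma atMostOne_cross (f : ℝ → ℝ) (s : Set ℝ) (hs : s.OrdConnected)
    (hdiff : ∀ x ∈ s, DifferentiableAt ℝ f x)
    (hpos : ∀ x ∈ s, f x = 1 → 0 < deriv f x) :
    {x ∈ s | f x = 1}.Subsingleton := by
  have key : ∀ a b : ℝ, a ∈ {x ∈ s | f x = 1} → b ∈ {x ∈ s | f x = 1} → a < b → False := by
    rintro a b ⟨has, hfa⟩ ⟨hbs, hfb⟩ hab
    have hsub : Set.Icc a b ⊆ s := hs.out has hbs
    have hderiv_a : 0 < deriv f a := hpos a has hfa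
    have hda : HasDerivAt f (deriv f a) a := (hdiff a has).hasDerivAt
    have hslope := hasDerivAt_iff_tendsto_slope.mp hda
    have hev : ∀ᶠ x in 𝓝[>] a, 0 < slope f a x :=
      (hslope.eventually (eventually_gt_nhds hderiv_a)).filter_mono
        (nhdsWithin_mono _ (fun x hx => ne_of_gt hx : Set.Ioi a ⊆ {a}ᶜ))
    have hmem : ∀ᶠ x in 𝓝[>] a, x ∈ Set.Ioo a b := Ioo_mem_nhdsGT_of_mem ⟨le_rfl, hab⟩
    obtain ⟨x₁, hx₁pos, hx₁mem⟩ := (hev.and hmem).exists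
    have hx₁a : a < x₁ := hx₁mem.1
    have hfx₁ : 1 < f x₁ := by
      rw [slope_def_field] at hx₁pos
      rcases div_pos_iff.mp hx₁pos with ⟨h1, _⟩ | ⟨_, h2⟩
      · linarith [hfa ▸ h1]
      · linarith
    -- set of crossing points in [x₁, b]
    set T : Set ℝ := {x ∈ Set.Icc x₁ b | f x = 1} with hT
    have hIccs : Set.Icc x₁ b ⊆ s := fun x hx => hsub ⟨le_trans hx₁a.le hx.1, hx.2⟩
    have hcontIcc : ContinuousOn f (Set.Icc x₁ b) := fun x hx =>
      ((hdiff x (hIccs hx)).continuousAt).continuousWithinAt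
    have hclosed : IsClosed T :=
      hcontIcc.preimage_isClosed_of_isClosed isClosed_Icc (isClosed_singleton (x := (1:ℝ)))
    have hTne : T.Nonempty := ⟨b, ⟨hx₁mem.2.le, le_rfl⟩, hfb⟩
    have hbdd : BddBelow T := ⟨x₁, fun x hx => hx.1.1⟩
    set c := sInf T with hc
    have hcT : c ∈ T := hclosed.csInf_mem hTne hbdd
    have hx₁c : x₁ < c := by
      rcases lt_or_eq_of_le (le_csInf hTne fun x hx => hx.1.1) with h | h
      · exact h
      · have hx1T : f x₁ = 1 := by rw [h]; exact hcT.2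
        linarith
    have hgt : ∀ x ∈ Set.Ico x₁ c, 1 < f x := by
      intro x hx
      by_contra hle
      push_neg at hle
      rcases lt_or_eq_of_le hle with hlt | heq
      · have hxb : x ≤ b := le_trans hx.2.le hcT.1.2
        have : (1:ℝ) ∈ Set.Icc (f x) (f x₁) := ⟨hlt.le, hfx₁.le⟩
        obtain ⟨y, hy, hfy⟩ := intermediate_value_Icc' hx.1
          (hcontIcc.mono (Set.Icc_subset_Icc le_rfl hxb)) this
        have : y ∈ T := ⟨⟨hy.1, le_trans hy.2 hxb⟩, hfy⟩
        have := csInf_le hbdd this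
        linarith [hy.2, hx.2]
      · have : x ∈ T := ⟨⟨hx.1, le_trans hx.2.le hcT.1.2⟩, heq⟩
        have := csInf_le hbdd this
        linarith [hx.2]
    have hcs : c ∈ s := hIccs hcT.1
    have hdc : 0 < deriv f c := hpos c hcs hcT.2
    have hdc' : HasDerivAt f (deriv f c) c := (hdiff c hcs).hasDerivAt
    have hslopec := hasDerivAt_iff_tendsto_slope.mp hdc'
    have hslopec' : Tendsto (slope f c) (𝓝[<] c) (𝓝 (deriv f c)) :=
      hslopec.mono_left (nhdsWithin_mono _ (fun x hx => ne_of_lt hx : Set.Iio c ⊆ {c}ᶜ))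
    have hevc : ∀ᶠ x in 𝓝[<] c, slope f c x ≤ 0 := by
      filter_upwards [Ico_mem_nhdsLT_of_mem (⟨hx₁c, le_rfl⟩ : c ∈ Set.Ioc x₁ c)] with x hx
      rw [slope_def_field]
      apply div_nonpos_of_nonneg_of_nonpos
      · have := hgt x hx; rw [hcT.2]; linarith
      · linarith [hx.2]
    have : deriv f c ≤ 0 := le_of_tendsto hslopec' hevc
    linarith
  intro a ha b hb
  by_contra hne
  rcases lt_trichotomy a b with h | h | h
  · exact key a b ha hb h
  · exact hne h
  · exact key b a hb ha h
/-- Crossing directions for the derivative of the value function: given the sign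
structure of g(x) = ρ - xμ(x) and the HJB relation φ'(x₀) = 2g(x₀)/(σ²x₀²)
whenever φ(x₀) = 1, up-crossings of level 1 occur only in (0,α₁) ∪ (α₂,∞),
down-crossings only in (α₁,α₂), and φ crosses level 1 at most three times. -/
theorem crossing_directions (μ φ : ℝ → ℝ) (ρ σ α₁ α₂ : ℝ)
    (hρ : 0 < ρ) (hσ : 0 < σ) (hα : 0 < α₁) (hαα : α₁ < α₂)
    (hcont : ContinuousOn μ (Set.Ici 0))
    (hg1 : ∀ x ∈ Set.Ico (0 : ℝ) α₁, 0 < ρ - x * μ x)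
    (hg2 : ∀ x ∈ Set.Ioo α₁ α₂, ρ - x * μ x < 0)
    (hg3 : ∀ x ∈ Set.Ioi α₂, 0 < ρ - x * μ x)
    (hdiff : ∀ x ∈ Set.Ioi (0 : ℝ), DifferentiableAt ℝ φ x)
    (hHJB : ∀ x₀ : ℝ, 0 < x₀ → φ x₀ = 1 →
      deriv φ x₀ = 2 * (ρ - x₀ * μ x₀) / (σ ^ 2 * x₀ ^ 2)) :
    (∀ x₀ : ℝ, 0 < x₀ → φ x₀ = 1 → 0 < deriv φ x₀ →
      x₀ ∈ Set.Ioo 0 α₁ ∪ Set.Ioi α₂) ∧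
    (∀ x₀ : ℝ, 0 < x₀ → φ x₀ = 1 → deriv φ x₀ < 0 →
      x₀ ∈ Set.Ioo α₁ α₂) ∧
    {x : ℝ | 0 < x ∧ φ x = 1 ∧ deriv φ x ≠ 0}.Finite ∧
    {x : ℝ | 0 < x ∧ φ x = 1 ∧ deriv φ x ≠ 0}.ncard ≤ 3 := by
  set g : ℝ → ℝ := fun x => ρ - x * μ x with hgdef
  -- continuity of g at positive points
  have hgc : ∀ x : ℝ, 0 < x → ContinuousAt g x := by
    intro x hx
    have hμ : ContinuousAt μ x :=
      hcont.continuousAt (mem_of_superset (Ioi_mem_nhds hx) Set.Ioi_subset_Ici_self)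
    exact continuousAt_const.sub (continuousAt_id.mul hμ)
  -- g α₁ = 0
  have hgα₁ : g α₁ = 0 := by
    have hc := (hgc α₁ hα)
    have h1 : g α₁ ≤ 0 := by
      have ht : Tendsto g (𝓝[>] α₁) (𝓝 (g α₁)) :=
        (hc.continuousWithinAt (s := Set.Ioi α₁))
      have hev : ∀ᶠ x in 𝓝[>] α₁, g x ≤ 0 := by
        have hmem : ∀ᶠ x in 𝓝[>] α₁, x ∈ Set.Ioo α₁ α₂ := Ioo_mem_nhdsGT_of_mem ⟨le_rfl, hαα⟩
        filter_upwards [hmem] with x hx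
        exact (hg2 x hx).le
      exact le_of_tendsto ht hev
    have h2 : 0 ≤ g α₁ := by
      have ht : Tendsto g (𝓝[<] α₁) (𝓝 (g α₁)) :=
        (hc.continuousWithinAt (s := Set.Iio α₁))
      have hev : ∀ᶠ x in 𝓝[<] α₁, 0 ≤ g x := by
        have hmem : ∀ᶠ x in 𝓝[<] α₁, x ∈ Set.Ioo 0 α₁ := Ioo_mem_nhdsLT_of_mem ⟨hα, le_rfl⟩
        filter_upwards [hmem] with x hx
        exact (hg1 x ⟨hx.1.le, hx.2⟩).le
      exact ge_of_tendsto ht hev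
    linarith
  -- g α₂ = 0
  have hgα₂ : g α₂ = 0 := by
    have hc := hgc α₂ (lt_trans hα hαα)
    have h1 : g α₂ ≤ 0 := by
      have ht : Tendsto g (𝓝[<] α₂) (𝓝 (g α₂)) :=
        (hc.continuousWithinAt (s := Set.Iio α₂))
      have hev : ∀ᶠ x in 𝓝[<] α₂, g x ≤ 0 := by
        have hmem : ∀ᶠ x in 𝓝[<] α₂, x ∈ Set.Ioo α₁ α₂ := Ioo_mem_nhdsLT_of_mem ⟨hαα, le_rfl⟩
        filter_upwards [hmem] with x hx
        exact (hg2 x hx).le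
      exact le_of_tendsto ht hev
    have h2 : 0 ≤ g α₂ := by
      have ht : Tendsto g (𝓝[>] α₂) (𝓝 (g α₂)) :=
        (hc.continuousWithinAt (s := Set.Ioi α₂))
      have hev : ∀ᶠ x in 𝓝[>] α₂, 0 ≤ g x := by
        have hmem : ∀ᶠ x in 𝓝[>] α₂, x ∈ Set.Ioi α₂ := self_mem_nhdsWithin
        filter_upwards [hmem] with x hx
        exact (hg3 x hx).le
      exact ge_of_tendsto ht hev
    linarith
  -- relating deriv sign to g sign at crossings
  have hgx : ∀ y : ℝ, g y = ρ - y * μ y := fun _ => rfl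
  have hden : ∀ x : ℝ, 0 < x → (0:ℝ) < σ ^ 2 * x ^ 2 := by intro x hx; positivity
  have hkey : ∀ x : ℝ, 0 < x → φ x = 1 → (0 < deriv φ x ↔ 0 < g x) := by
    intro x hx h1
    rw [hHJB x hx h1]
    constructor
    · intro h
      rcases div_pos_iff.mp h with ⟨hn, _⟩ | ⟨_, hd⟩
      · linarith [hgx x]
      · linarith [hden x hx]
    · intro h
      exact div_pos (by linarith [hgx x]) (hden x hx)
  have hkey' : ∀ x : ℝ, 0 < x → φ x = 1 → (deriv φ x < 0 ↔ g x < 0) := by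
    intro x hx h1
    rw [hHJB x hx h1]
    constructor
    · intro h
      rcases div_neg_iff.mp h with ⟨_, hd⟩ | ⟨hn, _⟩
      · linarith [hden x hx]
      · linarith [hgx x]
    · intro h
      exact div_neg_of_neg_of_pos (by linarith [hgx x]) (hden x hx)
  -- first conclusion
  have concl1 : ∀ x₀ : ℝ, 0 < x₀ → φ x₀ = 1 → 0 < deriv φ x₀ →
      x₀ ∈ Set.Ioo 0 α₁ ∪ Set.Ioi α₂ := by
    intro x₀ h0 h1 hd
    have hg : 0 < g x₀ := (hkey x₀ h0 h1).mp hd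
    rcases lt_trichotomy x₀ α₁ with h | h | h
    · exact Or.inl ⟨h0, h⟩
    · exact absurd (h ▸ hg) (by rw [hgα₁]; exact lt_irrefl 0)
    · rcases lt_trichotomy x₀ α₂ with h' | h' | h'
      · exact absurd hg (by linarith [hg2 x₀ ⟨h, h'⟩, hgx x₀])
      · exact absurd (h' ▸ hg) (by rw [hgα₂]; exact lt_irrefl 0)
      · exact Or.inr h'
  have concl2 : ∀ x₀ : ℝ, 0 < x₀ → φ x₀ = 1 → deriv φ x₀ < 0 →
      x₀ ∈ Set.Ioo α₁ α₂ := by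
    intro x₀ h0 h1 hd
    have hg : g x₀ < 0 := (hkey' x₀ h0 h1).mp hd
    rcases lt_trichotomy x₀ α₁ with h | h | h
    · exact absurd hg (by linarith [hg1 x₀ ⟨h0.le, h⟩, hgx x₀])
    · exact absurd (h ▸ hg) (by rw [hgα₁]; exact lt_irrefl 0)
    · rcases lt_trichotomy x₀ α₂ with h' | h' | h'
      · exact ⟨h, h'⟩
      · exact absurd (h' ▸ hg) (by rw [hgα₂]; exact lt_irrefl 0)
      · exact absurd hg (by linarith [hg3 x₀ h', hgx x₀])
  refine ⟨concl1, concl2, ?_, ?_⟩ <;>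
  · -- the three subsingleton pieces
    have hA : {x ∈ Set.Ioo 0 α₁ | φ x = 1}.Subsingleton := by
      apply atMostOne_cross φ _ Set.ordConnected_Ioo
      · intro x hx; exact hdiff x hx.1
      · intro x hx h1
        exact (hkey x hx.1 h1).mpr (hg1 x ⟨hx.1.le, hx.2⟩)
    have hC : {x ∈ Set.Ioi α₂ | φ x = 1}.Subsingleton := by
      apply atMostOne_cross φ _ Set.ordConnected_Ioi
      · intro x hx; exact hdiff x (lt_trans (lt_trans hα hαα) hx)
      · intro x hx h1
        exact (hkey x (lt_trans (lt_trans hα hαα) hx) h1).mpr (hg3 x hx)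
    have hB : {x ∈ Set.Ioo α₁ α₂ | (fun y => 2 - φ y) x = 1}.Subsingleton := by
      apply atMostOne_cross _ _ Set.ordConnected_Ioo
      · intro x hx
        exact (differentiable_const (2:ℝ)).differentiableAt.sub (hdiff x (lt_trans hα hx.1))
      · intro x hx h1
        have hx0 : (0:ℝ) < x := lt_trans hα hx.1
        have h1' : 2 - φ x = 1 := h1
        have hφ1 : φ x = 1 := by linarith
        have hd : deriv φ x < 0 := (hkey' x hx0 hφ1).mpr (hg2 x hx)
        rw [deriv_const_sub]
        linarith
    have hsubset : {x : ℝ | 0 < x ∧ φ x = 1 ∧ deriv φ x ≠ 0} ⊆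
        {x ∈ Set.Ioo 0 α₁ | φ x = 1} ∪ {x ∈ Set.Ioo α₁ α₂ | (fun y => 2 - φ y) x = 1} ∪
        {x ∈ Set.Ioi α₂ | φ x = 1} := by
      rintro x ⟨hx0, hx1, hxd⟩
      have hgne : g x ≠ 0 := by
        intro h
        apply hxd
        rw [hHJB x hx0 hx1]
        simp [hgdef ▸ h]
      rcases lt_trichotomy x α₁ with h | h | h
      · exact Or.inl (Or.inl ⟨⟨hx0, h⟩, hx1⟩)
      · exact absurd (h ▸ hgne) (by rw [hgα₁]; simp)
      · rcases lt_trichotomy x α₂ with h' | h' | h'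
        · exact Or.inl (Or.inr ⟨⟨h, h'⟩, show 2 - φ x = 1 by rw [hx1]; norm_num⟩)
        · exact absurd (h' ▸ hgne) (by rw [hgα₂]; simp)
        · exact Or.inr ⟨h', hx1⟩
    have hfinA := hA.finite
    have hfinB := hB.finite
    have hfinC := hC.finite
    have hfinU : ({x ∈ Set.Ioo 0 α₁ | φ x = 1} ∪ {x ∈ Set.Ioo α₁ α₂ | (fun y => 2 - φ y) x = 1} ∪
        {x ∈ Set.Ioi α₂ | φ x = 1}).Finite := (hfinA.union hfinB).union hfinC
    first
    | exact hfinU.subset hsubset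
    | · -- ncard bound
        have h1 : {x : ℝ | 0 < x ∧ φ x = 1 ∧ deriv φ x ≠ 0}.ncard ≤
            ({x ∈ Set.Ioo 0 α₁ | φ x = 1} ∪ {x ∈ Set.Ioo α₁ α₂ | (fun y => 2 - φ y) x = 1} ∪
            {x ∈ Set.Ioi α₂ | φ x = 1}).ncard := Set.ncard_le_ncard hsubset hfinU
        have hcard : ∀ s : Set ℝ, s.Subsingleton → s.ncard ≤ 1 := by
          intro s hs
          rcases s.eq_empty_or_nonempty with h | ⟨x, hx⟩
          · simp [h]
          · rw [hs.eq_singleton_of_mem hx]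
            simp
        calc {x : ℝ | 0 < x ∧ φ x = 1 ∧ deriv φ x ≠ 0}.ncard ≤ _ := h1
          _ ≤ _ + _ := Set.ncard_union_le _ _
          _ ≤ (1 + 1) + 1 := by
              gcongr
              · calc _ ≤ _ + _ := Set.ncard_union_le _ _
                  _ ≤ 1 + 1 := by gcongr; exacts [hcard _ hA, hcard _ hB]
              · exact hcard _ hC
          _ ≤ 3 := by norm_num
end
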